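/- Suppose x ∈ ℝⁿ satisfies F(x) ≤ 0 entrywise, 0 ≤ x entrywise, and eᵀx ≤ 1, and let z ∈ ℝⁿ satisfy 0 ≤ z ≤ x entrywise. Then x ≤ x − (F'_z)⁻¹F(x) ≤ x − (F'ₓ)⁻¹F(x) entrywise; that is, the modified Newton step with derivative evaluated at z lies between x and the full Newton step. -/

import Mathlib

open Matrix BigOperators Finset Filter
open scoped NNReal

noncomputable section

attribute [local instance] Matrix.linftyOpNormedRing Matrix.linftyOpNormedSpace

namespace StmtAux

variable {n : ℕ}

instance : CompleteSpace (Matrix (Fin n) (Fin n) ℝ) :=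
  FiniteDimensional.complete ℝ _

lemma norm_lt_one {c : ℝ} (hc : c < 1) (A : Matrix (Fin n) (Fin n) ℝ)
    (hA0 : ∀ i j, 0 ≤ A i j) (hrow : ∀ i, ∑ j, A i j ≤ c) : ‖A‖ < 1 := by
  rw [Matrix.linfty_opNorm_def]
  have h1 : (Finset.univ.sup fun i : Fin n => ∑ j, ‖A i j‖₊) < 1 := by
    refine Finset.sup_lt_iff (by norm_num) |>.mpr fun i _ => ?_
    have : ((∑ j, ‖A i j‖₊ : ℝ≥0) : ℝ) < 1 := by
      push_cast
      have : ∑ j, ‖A i j‖ = ∑ j, A i j :=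
        Finset.sum_congr rfl fun j _ => by
          rw [Real.norm_eq_abs, abs_of_nonneg (hA0 i j)]
      rw [this]; exact lt_of_le_of_lt (hrow i) hc
    exact_mod_cast this
  exact_mod_cast h1

lemma entry_tsum (i j : Fin n) (M : ℕ → Matrix (Fin n) (Fin n) ℝ) (hM : Summable M) :
    HasSum (fun k => M k i j) ((∑' k, M k) i j) := by
  let φ : Matrix (Fin n) (Fin n) ℝ →ₗ[ℝ] ℝ :=
    { toFun := fun M => M i j
      map_add' := fun _ _ => rfl
      map_smul' := fun _ _ => rfl }
  exact hM.hasSum.map φ.toAddMonoidHom (LinearMap.continuous_of_finiteDimensional φ)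

lemma inv_one_sub {c : ℝ} (hc : c < 1) (A B : Matrix (Fin n) (Fin n) ℝ)
    (hA0 : ∀ i j, 0 ≤ A i j) (hAB : ∀ i j, A i j ≤ B i j)
    (hrow : ∀ i, ∑ j, B i j ≤ c) :
    (∀ i j, 0 ≤ (1 - A)⁻¹ i j) ∧ ∀ i j, (1 - A)⁻¹ i j ≤ (1 - B)⁻¹ i j := by
  have hB0 : ∀ i j, 0 ≤ B i j := fun i j => (hA0 i j).trans (hAB i j)
  have hArow : ∀ i, ∑ j, A i j ≤ c := fun i =>
    le_trans (Finset.sum_le_sum fun j _ => hAB i j) (hrow i)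
  have hnA : ‖A‖ < 1 := norm_lt_one hc A hA0 hArow
  have hnB : ‖B‖ < 1 := norm_lt_one hc B hB0 hrow
  have hpow : ∀ k : ℕ, (∀ i j, 0 ≤ (A ^ k) i j) ∧ (∀ i j, (A ^ k) i j ≤ (B ^ k) i j)
      ∧ (∀ i j, 0 ≤ (B ^ k) i j) := by
    intro k
    induction k with
    | zero =>
      refine ⟨fun i j => ?_, fun i j => ?_, fun i j => ?_⟩ <;>
        simp [Matrix.one_apply] <;> split <;> norm_num
    | succ k ih =>
      obtain ⟨h1, h2, h3⟩ := ih
      refine ⟨fun i j => ?_, fun i j => ?_, fun i j => ?_⟩ <;>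
        simp only [pow_succ, Matrix.mul_apply]
      · exact Finset.sum_nonneg fun l _ => mul_nonneg (h1 i l) (hA0 l j)
      · exact Finset.sum_le_sum fun l _ =>
          mul_le_mul (h2 i l) (hAB l j) (hA0 l j) ((h3 i l))
      · exact Finset.sum_nonneg fun l _ => mul_nonneg (h3 i l) (hB0 l j)
  have hSA : Summable (fun k : ℕ => A ^ k) := summable_geometric_of_norm_lt_one hnA
  have hSB : Summable (fun k : ℕ => B ^ k) := summable_geometric_of_norm_lt_one hnB
  have hinvA : (1 - A)⁻¹ = ∑' k : ℕ, A ^ k := by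
    rw [Matrix.nonsing_inv_eq_ringInverse, ← geom_series_eq_inverse A hnA]; rfl
  have hinvB : (1 - B)⁻¹ = ∑' k : ℕ, B ^ k := by
    rw [Matrix.nonsing_inv_eq_ringInverse, ← geom_series_eq_inverse B hnB]; rfl
  constructor
  · intro i j
    rw [hinvA, ← (entry_tsum i j _ hSA).tsum_eq]
    exact tsum_nonneg fun k => (hpow k).1 i j
  · intro i j
    rw [hinvA, hinvB, ← (entry_tsum i j _ hSA).tsum_eq, ← (entry_tsum i j _ hSB).tsum_eq]
    exact Summable.tsum_le_tsum (fun k => (hpow k).2.1 i j)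
      (entry_tsum i j _ hSA).summable (entry_tsum i j _ hSB).summable

end StmtAux

/-- Kronecker product of two vectors: `(u ⊗ w)_{(i,j)} = u_i w_j`. -/
def kron {n : ℕ} (u w : Fin n → ℝ) : Fin n × Fin n → ℝ := fun p => u p.1 * w p.2

/-- `u ⊗ I` : the `n² × n` Kronecker product of a vector with the identity,
so that `(u ⊗ I) w = u ⊗ w`. -/
def kronVecId {n : ℕ} (u : Fin n → ℝ) : Matrix (Fin n × Fin n) (Fin n) ℝ :=
  Matrix.of fun p k => u p.1 * (if p.2 = k then (1 : ℝ) else 0)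

/-- `I ⊗ u` : the `n² × n` Kronecker product of the identity with a vector,
so that `(I ⊗ u) w = w ⊗ u`. -/
def idKronVec {n : ℕ} (u : Fin n → ℝ) : Matrix (Fin n × Fin n) (Fin n) ℝ :=
  Matrix.of fun p k => (if p.1 = k then (1 : ℝ) else 0) * u p.2

/-- `F(x) = x − α R (x ⊗ x) − (1 − α) v`. -/
def Fmap {n : ℕ} (α : ℝ) (R : Matrix (Fin n) (Fin n × Fin n) ℝ) (v : Fin n → ℝ)
    (x : Fin n → ℝ) : Fin n → ℝ :=
  x - α • R.mulVec (kron x x) - (1 - α) • v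

/-- `F'ₓ = I − α R (x ⊗ I + I ⊗ x)`. -/
def Fprime {n : ℕ} (α : ℝ) (R : Matrix (Fin n) (Fin n × Fin n) ℝ)
    (x : Fin n → ℝ) : Matrix (Fin n) (Fin n) ℝ :=
  1 - α • (R * (kronVecId x + idKronVec x))

theorem stmt11 {n : ℕ} (hn : 1 ≤ n) (α : ℝ) (hα0 : 0 < α) (hα : α < 1 / 2)
    (R : Matrix (Fin n) (Fin n × Fin n) ℝ) (hR0 : ∀ i p, 0 ≤ R i p)
    (hRcol : ∀ p, ∑ i, R i p = 1)
    (v : Fin n → ℝ) (hv0 : 0 ≤ v) (hv1 : ∑ i, v i = 1)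
    (x : Fin n → ℝ) (hFx : Fmap α R v x ≤ 0) (hx0 : 0 ≤ x) (hx1 : ∑ i, x i ≤ 1)
    (z : Fin n → ℝ) (hz0 : 0 ≤ z) (hzx : z ≤ x) :
    x ≤ x - (Fprime α R z)⁻¹.mulVec (Fmap α R v x) ∧
    x - (Fprime α R z)⁻¹.mulVec (Fmap α R v x) ≤
      x - (Fprime α R x)⁻¹.mulVec (Fmap α R v x) := by
  set M : (Fin n → ℝ) → Matrix (Fin n) (Fin n) ℝ :=
    fun u => α • (R * (kronVecId u + idKronVec u)) with hM
  -- entries of M u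
  have hMapp : ∀ (u : Fin n → ℝ) i k, M u i k =
      α * ∑ p : Fin n × Fin n, R i p *
        (u p.1 * (if p.2 = k then (1:ℝ) else 0) + (if p.1 = k then (1:ℝ) else 0) * u p.2) := by
    intro u i k
    simp [hM, Matrix.mul_apply, kronVecId, idKronVec, Finset.mul_sum]
  -- nonnegativity of entries
  have hMnn : ∀ (u : Fin n → ℝ), 0 ≤ u → ∀ i k, 0 ≤ M u i k := by
    intro u hu i k
    rw [hMapp]
    refine mul_nonneg hα0.le (Finset.sum_nonneg fun p _ => mul_nonneg (hR0 i p) ?_)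
    have h1 : 0 ≤ u p.1 := hu p.1
    have h2 : 0 ≤ u p.2 := hu p.2
    positivity
  -- monotonicity of entries
  have hMmono : ∀ i k, M z i k ≤ M x i k := by
    intro i k
    rw [hMapp, hMapp]
    refine mul_le_mul_of_nonneg_left (Finset.sum_le_sum fun p _ => ?_) hα0.le
    refine mul_le_mul_of_nonneg_left ?_ (hR0 i p)
    have e1 : (0:ℝ) ≤ (if p.2 = k then (1:ℝ) else 0) := by split <;> norm_num
    have e2 : (0:ℝ) ≤ (if p.1 = k then (1:ℝ) else 0) := by split <;> norm_num
    exact add_le_add (mul_le_mul_of_nonneg_right (hzx p.1) e1)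
      (mul_le_mul_of_nonneg_left (hzx p.2) e2)
  -- column sums
  have hMcol : ∀ (u : Fin n → ℝ), ∀ k, ∑ i, M u i k = 2 * α * ∑ i, u i := by
    intro u k
    have : ∑ i, M u i k = α * ∑ p : Fin n × Fin n, (∑ i, R i p) *
        (u p.1 * (if p.2 = k then (1:ℝ) else 0) + (if p.1 = k then (1:ℝ) else 0) * u p.2) := by
      simp_rw [hMapp, ← Finset.mul_sum]
      rw [Finset.sum_comm]
      simp_rw [Finset.sum_mul]
    rw [this]
    simp_rw [hRcol, one_mul]
    rw [Fintype.sum_prod_type]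
    simp [Finset.sum_add_distrib, mul_ite, ite_mul, mul_one, mul_zero, zero_mul, one_mul,
      Finset.sum_ite_eq', Finset.sum_ite_eq]
    ring
  have hsz : ∑ i, z i ≤ 1 := le_trans (Finset.sum_le_sum fun i _ => hzx i) hx1
  have hc : 2 * α < 1 := by linarith
  -- row sums of transposes
  have hrowx : ∀ i, ∑ j, (M x)ᵀ i j ≤ 2 * α := by
    intro i
    have := hMcol x i
    simp only [Matrix.transpose_apply]
    rw [this]
    nlinarith
  have key := StmtAux.inv_one_sub hc (M z)ᵀ (M x)ᵀ
    (fun i j => hMnn z hz0 j i) (fun i j => hMmono j i) hrowx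
  -- relate Fprime inverse to (1 - Mᵀ)⁻¹
  have hrel : ∀ (u : Fin n → ℝ) i j, (Fprime α R u)⁻¹ i j = (1 - (M u)ᵀ)⁻¹ j i := by
    intro u i j
    have h1 : (Fprime α R u)ᵀ = 1 - (M u)ᵀ := by
      simp [Fprime, Matrix.transpose_sub, Matrix.transpose_one, hM]
    have h2 : (Fprime α R u)⁻¹ᵀ = (1 - (M u)ᵀ)⁻¹ := by
      rw [Matrix.transpose_nonsing_inv, h1]
    calc (Fprime α R u)⁻¹ i j = (Fprime α R u)⁻¹ᵀ j i := rfl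
    _ = (1 - (M u)ᵀ)⁻¹ j i := by rw [h2]
  have hinvz : ∀ i j, 0 ≤ (Fprime α R z)⁻¹ i j := by
    intro i j; rw [hrel]; exact key.1 j i
  have hinvzx : ∀ i j, (Fprime α R z)⁻¹ i j ≤ (Fprime α R x)⁻¹ i j := by
    intro i j; rw [hrel, hrel]; exact key.2 j i
  have hinvx : ∀ i j, 0 ≤ (Fprime α R x)⁻¹ i j :=
    fun i j => le_trans (hinvz i j) (hinvzx i j)
  constructor
  · intro i
    simp only [Pi.sub_apply, Matrix.mulVec, dotProduct]
    have : ∑ j, (Fprime α R z)⁻¹ i j * Fmap α R v x j ≤ 0 :=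
      Finset.sum_nonpos fun j _ => mul_nonpos_of_nonneg_of_nonpos (hinvz i j) (hFx j)
    linarith
  · intro i
    simp only [Pi.sub_apply, Matrix.mulVec, dotProduct]
    have : ∑ j, (Fprime α R x)⁻¹ i j * Fmap α R v x j ≤
        ∑ j, (Fprime α R z)⁻¹ i j * Fmap α R v x j :=
      Finset.sum_le_sum fun j _ =>
        mul_le_mul_of_nonpos_right (hinvzx i j) (hFx j)
    linarith
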